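/- Let X be a finite metric space partitioned into m ≥ 1 pairwise disjoint groups X_1,…,X_m, let k_1,…,k_m ≥ 1 with k = k_1+⋯+k_m ≥ 2, and let μ > 0. Suppose: S_0 ⊆ X is μ-separated with |S_0| = k; and for each i ∈ {1,…,m}, S_i ⊆ X_i is μ-separated with k_i ≤ |S_i| ≤ k and such that if |S_i| < k then every x ∈ X_i satisfies d(x, S_i) < μ. Let P = S_0 ∪ S_1 ∪ ⋯ ∪ S_m and consider the chain relation ~ on P with threshold τ = μ/(m+1). If there exists a fair subset T ⊆ X with div(T) ≥ ((3m+2)/(m+1)) · μ, then there exists a set S ⊆ P with |S ∩ X_i| = k_i for every i ∈ {1,…,m} such that no two distinct elements of S are ~-related; consequently S is fair, |S| = k, and div(S) ≥ μ/(m+1). (Lemma 4: existence of a size-k common independent set of the fairness partition matroid and the cluster partition matroid.) -/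

import Mathlib

open Finset

variable {α : Type*} [MetricSpace α] [DecidableEq α]

/-- A finite set `S` is `μ`-separated if `d(x,y) ≥ μ` for all distinct `x, y ∈ S`. -/
def Separated (μ : ℝ) (S : Finset α) : Prop :=
  ∀ x ∈ S, ∀ y ∈ S, x ≠ y → μ ≤ dist x y

/-- Max–min diversity of a finite set: the minimum pairwise distance over distinct pairs. -/
noncomputable def divers (S : Finset α) : ℝ :=
  sInf {r : ℝ | ∃ x ∈ S, ∃ y ∈ S, x ≠ y ∧ dist x y = r}

/-- Distance from a point to a (nonempty) finite set: `d(y,S) = min_{s ∈ S} d(y,s)`. -/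
noncomputable def setDist (y : α) (S : Finset α) : ℝ :=
  sInf {r : ℝ | ∃ s ∈ S, dist y s = r}

/-- Minimum pairwise distance over distinct pairs of `X`. -/
noncomputable def dMin (X : Finset α) : ℝ :=
  sInf {r : ℝ | ∃ x ∈ X, ∃ y ∈ X, x ≠ y ∧ dist x y = r}

/-- Maximum pairwise distance over distinct pairs of `X`. -/
noncomputable def dMax (X : Finset α) : ℝ :=
  sSup {r : ℝ | ∃ x ∈ X, ∃ y ∈ X, x ≠ y ∧ dist x y = r}

/-- The geometric grid of guesses `U = { d_min/(1-ε)^j : j ∈ ℕ } ∩ [d_min, d_max]`. -/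
def grid (X : Finset α) (ε : ℝ) : Set ℝ :=
  {μ | (∃ j : ℕ, μ = dMin X / (1 - ε) ^ j) ∧ dMin X ≤ μ ∧ μ ≤ dMax X}

/-- A greedy candidate on ground set `Y` with threshold `μ` and capacity `c`:
`S ⊆ Y`, `S` is `μ`-separated, `|S| ≤ c`, and if `|S| < c` then every `y ∈ Y`
satisfies `d(y,S) < μ` (i.e., has some element of `S` within distance `< μ`). -/
def GreedyCandidate (μ : ℝ) (c : ℕ) (Y S : Finset α) : Prop :=
  S ⊆ Y ∧ Separated μ S ∧ S.card ≤ c ∧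
    (S.card < c → ∀ y ∈ Y, ∃ s ∈ S, dist y s < μ)

/-- `OPT`: the maximum of `div(T)` over all `k`-element subsets `T ⊆ X`. -/
noncomputable def OPTk (X : Finset α) (k : ℕ) : ℝ :=
  sSup {r : ℝ | ∃ T ⊆ X, T.card = k ∧ divers T = r}

/-- `OPT_f`: the maximum of `div(S)` over all fair subsets `S ⊆ X`
(those with `|S ∩ X_i| = k_i` for every group `i`). -/
noncomputable def OPTf (X : Finset α) {m : ℕ} (Xg : Fin m → Finset α) (kg : Fin m → ℕ) : ℝ :=
  sSup {r : ℝ | ∃ S ⊆ X, (∀ i, (S ∩ Xg i).card = kg i) ∧ divers S = r}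

/-- The chain relation on `P` with threshold `τ`: the reflexive–transitive closure of
"both points are in `P` and their distance is `< τ`". -/
def ChainRel (P : Finset α) (τ : ℝ) : α → α → Prop :=
  Relation.ReflTransGen (fun x y => x ∈ P ∧ y ∈ P ∧ dist x y < τ)

private lemma dup_decomp : ∀ (l : List α), ¬ l.Nodup →
    ∃ (a : α) (A B C : List α), l = A ++ a :: (B ++ a :: C) := by
  intro l
  induction l with
  | nil => intro h; exact absurd List.nodup_nil h
  | cons x t ih =>
    intro h
    by_cases hx : x ∈ t
    · obtain ⟨B, C, rfl⟩ := List.append_of_mem hx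
      exact ⟨x, [], B, C, rfl⟩
    · have hnd : ¬ t.Nodup := fun hn => h (List.nodup_cons.2 ⟨hx, hn⟩)
      obtain ⟨a, A, B, C, rfl⟩ := ih hnd
      exact ⟨a, x :: A, B, C, rfl⟩

private lemma chain_dist_le (P : Finset α) (τ μ : ℝ) (m : ℕ)
    (hτ0 : 0 < τ) (hτμ : ((m : ℝ) + 1) * τ ≤ μ)
    (F : Fin (m + 1) → Finset α)
    (hFs : ∀ j, Separated μ (F j))
    (hPF : ∀ p ∈ P, ∃ j, p ∈ F j)
    {x y : α} (h : ChainRel P τ x y) :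
    dist x y ≤ m * τ := by
  classical
  set r : α → α → Prop := fun a b => a ∈ P ∧ b ∈ P ∧ dist a b < τ with hr
  -- labels
  let lab : α → Fin (m + 1) := fun p => if h : ∃ j, p ∈ F j then h.choose else 0
  have hlab : ∀ p ∈ P, p ∈ F (lab p) := by
    intro p hp
    have h' : ∃ j, p ∈ F j := hPF p hp
    simp only [lab, dif_pos h']
    exact h'.choose_spec
  -- distance along a chain between indices
  have step : ∀ (L : List α), L.Chain' r → ∀ (i d : ℕ) (h : i + d + 1 < L.length),
      dist (L.get ⟨i, by omega⟩) (L.get ⟨i + d + 1, h⟩) < ((d : ℝ) + 1) * τ := by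
    intro L hL i d
    induction d with
    | zero =>
      intro h
      have := (List.isChain_iff_getElem.1 hL) i (by omega)
      simpa using this.2.2
    | succ d ih =>
      intro h
      have h1 : i + d + 1 < L.length := by omega
      have h2 := ih h1
      have h3 := (List.isChain_iff_getElem.1 hL) (i + d + 1) (by omega)
      have htri : dist (L.get ⟨i, by omega⟩) (L.get ⟨i + (d+1) + 1, h⟩) ≤
          dist (L.get ⟨i, by omega⟩) (L.get ⟨i + d + 1, h1⟩) +
          dist (L.get ⟨i + d + 1, h1⟩) (L.get ⟨i + (d+1) + 1, h⟩) := by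
        have : i + (d+1) + 1 = (i + d + 1) + 1 := by omega
        exact dist_triangle _ _ _
      have h4 : dist (L.get ⟨i + d + 1, h1⟩) (L.get ⟨i + (d+1) + 1, h⟩) < τ := by
        have hidx : i + (d+1) + 1 = (i + d + 1) + 1 := by omega
        have := h3.2.2
        simp only [List.get_eq_getElem]
        convert this using 3 <;> omega
      push_cast
      calc dist (L.get ⟨i, by omega⟩) (L.get ⟨i + (d+1) + 1, h⟩)
          ≤ _ + _ := htri
        _ < ((d : ℝ) + 1) * τ + τ := by exact add_lt_add h2 h4
        _ = ((d : ℝ) + 1 + 1) * τ := by ring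
  -- membership of chain points in P
  have memP : ∀ (L : List α), L.Chain' r → 2 ≤ L.length →
      ∀ (i : ℕ) (h : i < L.length), L.get ⟨i, h⟩ ∈ P := by
    intro L hL h2 i hi
    rcases lt_or_ge (i + 1) L.length with h' | h'
    · exact ((List.isChain_iff_getElem.1 hL) i (by omega)).1
    · have hi1 : i - 1 + 1 < L.length := by omega
      have := ((List.isChain_iff_getElem.1 hL) (i - 1) (by omega)).2.1
      simp only [List.get_eq_getElem]
      convert this using 3
      omega
  -- main strong induction
  have main : ∀ (n : ℕ) (L : List α), L.length ≤ n → L.Chain' r → ∀ a b,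
      L.head? = some a → L.getLast? = some b → dist a b ≤ (m : ℝ) * τ := by
    intro n
    induction n with
    | zero =>
      intro L hlen _ a b ha _
      have : L = [] := List.length_eq_zero_iff.1 (Nat.le_zero.1 hlen)
      subst this; simp at ha
    | succ n ih =>
      intro L hlen hC a b ha hb
      by_cases hnd : L.Nodup
      · have hne : L ≠ [] := by rintro rfl; simp at ha
        have hL0 : 0 < L.length := List.length_pos_iff.2 hne
        have ha' : a = L.get ⟨0, hL0⟩ := by
          rw [List.head?_eq_head hne] at ha
          have := Option.some.inj ha
          rw [← this]
          simp [List.head_eq_getElem_zero]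
        have hb' : b = L.get ⟨L.length - 1, by omega⟩ := by
          rw [List.getLast?_eq_getLast_of_ne_nil hne] at hb
          have := Option.some.inj hb
          rw [← this]
          simp [List.getLast_eq_getElem]
        rcases lt_or_ge L.length (m + 2) with hsmall | hbig
        · -- short chain
          rcases Nat.lt_or_ge 1 L.length with hlen2 | hlen1
          · -- 2 ≤ L.length
            have hd : 0 + (L.length - 2) + 1 < L.length := by omega
            have := step L hC 0 (L.length - 2) hd
            have hidx : (L.get ⟨0 + (L.length - 2) + 1, hd⟩ : α) = L.get ⟨L.length - 1, by omega⟩ := by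
              congr 1
              apply Fin.ext
              simp
              omega
            rw [hidx] at this
            rw [ha', hb']
            have hcast : ((L.length - 2 : ℕ) : ℝ) + 1 ≤ (m : ℝ) := by
              have : L.length - 2 + 1 ≤ m := by omega
              exact_mod_cast this
            have hmul : (((L.length - 2 : ℕ) : ℝ) + 1) * τ ≤ (m : ℝ) * τ :=
              mul_le_mul_of_nonneg_right hcast (le_of_lt hτ0)
            linarith
          · -- L.length = 1
            have h1 : L.length = 1 := by omega
            have : a = b := by
              rw [ha', hb']
              congr 1
              apply Fin.ext
              simp
              omega
            rw [this, dist_self]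
            positivity
        · -- pigeonhole: contradiction
          exfalso
          have h2L : 2 ≤ L.length := by omega
          have contra : ∀ (i j : Fin (m + 2)), (i : ℕ) < (j : ℕ) →
              lab (L.get ⟨(i : ℕ), by omega⟩) = lab (L.get ⟨(j : ℕ), by omega⟩) → False := by
            intro i j hij heq
            have hi2 := i.isLt
            have hj2 := j.isLt
            set p : α := L.get ⟨(i : ℕ), by omega⟩ with hp
            set q : α := L.get ⟨(j : ℕ), by omega⟩ with hq
            have hpq : p ≠ q := by
              intro hpq
              have := (List.Nodup.get_inj_iff hnd).1 hpq
              simp only [Fin.mk.injEq] at this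
              omega
            have hpP : p ∈ P := memP L hC h2L _ _
            have hqP : q ∈ P := memP L hC h2L _ _
            have hpF : p ∈ F (lab p) := hlab p hpP
            have hqF : q ∈ F (lab p) := heq ▸ hlab q hqP
            have hsep : μ ≤ dist p q := hFs (lab p) p hpF q hqF hpq
            have hd : (i : ℕ) + ((j : ℕ) - (i : ℕ) - 1) + 1 < L.length := by omega
            have hstep := step L hC (i : ℕ) ((j : ℕ) - (i : ℕ) - 1) hd
            have hidx : (L.get ⟨(i : ℕ) + ((j : ℕ) - (i : ℕ) - 1) + 1, hd⟩ : α) = q := by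
              rw [hq]; congr 1; apply Fin.ext; simp; omega
            rw [hidx] at hstep
            have hcast : (((j : ℕ) - (i : ℕ) - 1 : ℕ) : ℝ) + 1 ≤ (m : ℝ) + 1 := by
              have : (j : ℕ) - (i : ℕ) - 1 + 1 ≤ m + 1 := by omega
              exact_mod_cast this
            have : dist p q < μ :=
              lt_of_lt_of_le hstep (le_trans (mul_le_mul_of_nonneg_right hcast (le_of_lt hτ0)) hτμ)
            linarith
          obtain ⟨i, j, hij, heq⟩ := Fintype.exists_ne_map_eq_of_card_lt
            (fun i : Fin (m + 2) => lab (L.get ⟨(i : ℕ), by omega⟩))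
            (by simp)
          rcases lt_or_gt_of_ne (fun h => hij (Fin.ext (congrArg Fin.val h))) with h' | h'
          · exact contra i j (by exact_mod_cast h') heq
          · exact contra j i (by exact_mod_cast h') heq.symm
      · -- duplicate: splice
        obtain ⟨c, A, B, C, rfl⟩ := dup_decomp _ hnd
        have h2 := List.isChain_append.1 hC
        have hsfx : List.Chain' r (c :: C) :=
          h2.2.1.suffix ((List.suffix_append B (c :: C)).trans (List.suffix_cons c _))
        have hnew : List.Chain' r (A ++ c :: C) :=
          List.isChain_append.2 ⟨h2.1, hsfx, by
            intro u hu v hv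
            have hv' : c = v := by simpa using hv
            subst hv'
            exact h2.2.2 u hu _ (by simp)⟩
        have hhead : (A ++ c :: C).head? = (A ++ c :: (B ++ c :: C)).head? := by
          cases A <;> simp
        have hlast : (A ++ c :: C).getLast? = (A ++ c :: (B ++ c :: C)).getLast? := by
          rw [List.getLast?_append_of_ne_nil _ (List.cons_ne_nil c C),
            List.getLast?_append_of_ne_nil _ (List.cons_ne_nil c _),
            show c :: (B ++ c :: C) = (c :: B) ++ (c :: C) by simp,
            List.getLast?_append_of_ne_nil _ (List.cons_ne_nil c C)]
        refine ih (A ++ c :: C) ?_ hnew a b (hhead.trans ha) (hlast.trans hb)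
        have := hlen
        simp only [List.length_append, List.length_cons] at this ⊢
        omega
  obtain ⟨l, hc, hlast⟩ := List.exists_isChain_cons_of_relationReflTransGen h
  have hC : List.Chain' r (x :: l) := hc
  have := main (x :: l).length (x :: l) le_rfl hC x y rfl
    (by rw [List.getLast?_eq_getLast_of_ne_nil (List.cons_ne_nil x l)]; rw [hlast])
  exact this

/-- Lemma 4: existence of a size-`k` common independent set of the fairness partition
matroid and the cluster partition matroid, provided a fair set of diversity at least
`((3m+2)/(m+1))·μ` exists. -/
theorem stmt_9 (X : Finset α) (m : ℕ) (hm : 1 ≤ m)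
    (Xg : Fin m → Finset α) (kg : Fin m → ℕ) (μ : ℝ)
    (hcover : X = Finset.univ.biUnion Xg)
    (hdisj : ∀ i j, i ≠ j → Disjoint (Xg i) (Xg j))
    (hne : ∀ i, (Xg i).Nonempty)
    (hkg : ∀ i, 1 ≤ kg i) (hk2 : 2 ≤ ∑ i, kg i) (hμ : 0 < μ)
    (S₀ : Finset α)
    (hS₀ : S₀ ⊆ X ∧ Separated μ S₀ ∧ S₀.card = ∑ i, kg i)
    (Sg : Fin m → Finset α)
    (hSg : ∀ i, Sg i ⊆ Xg i ∧ Separated μ (Sg i) ∧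
      kg i ≤ (Sg i).card ∧ (Sg i).card ≤ ∑ j, kg j ∧
      ((Sg i).card < ∑ j, kg j → ∀ x ∈ Xg i, ∃ s ∈ Sg i, dist x s < μ))
    (T : Finset α)
    (hT : T ⊆ X ∧ (∀ i, (T ∩ Xg i).card = kg i) ∧
      (3 * (m : ℝ) + 2) / ((m : ℝ) + 1) * μ ≤ divers T) :
    ∃ S ⊆ S₀ ∪ Finset.univ.biUnion Sg,
      (∀ i, (S ∩ Xg i).card = kg i) ∧
      (∀ x ∈ S, ∀ y ∈ S, x ≠ y →
        ¬ ChainRel (S₀ ∪ Finset.univ.biUnion Sg) (μ / ((m : ℝ) + 1)) x y) ∧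
      S.card = ∑ i, kg i ∧
      μ / ((m : ℝ) + 1) ≤ divers S := by
  
  classical
  obtain ⟨hS₀X, hS₀sep, hS₀card⟩ := hS₀
  obtain ⟨hTX, hTcard, hTdiv⟩ := hT
  set k : ℕ := ∑ i, kg i with hk
  set τ : ℝ := μ / ((m : ℝ) + 1) with hτ
  set P : Finset α := S₀ ∪ Finset.univ.biUnion Sg with hPdef
  have hm1 : (0 : ℝ) < (m : ℝ) + 1 := by positivity
  have hτ0 : 0 < τ := by rw [hτ]; positivity
  have hτμ : ((m : ℝ) + 1) * τ = μ := by rw [hτ]; field_simp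
  have hmτ : (m : ℝ) * τ = μ - τ := by linarith
  -- the family of m+1 separated sets covering P
  let F : Fin (m + 1) → Finset α := Fin.cons S₀ Sg
  have hFs : ∀ j, Separated μ (F j) := by
    intro j
    refine Fin.cases ?_ ?_ j
    · exact hS₀sep
    · intro i; exact (hSg i).2.1
  have hPF : ∀ p ∈ P, ∃ j, p ∈ F j := by
    intro p hp
    rcases Finset.mem_union.1 hp with h | h
    · exact ⟨0, h⟩
    · obtain ⟨i, -, hi⟩ := Finset.mem_biUnion.1 h
      exact ⟨i.succ, by simpa [F] using hi⟩
  have key : ∀ x y, ChainRel P τ x y → dist x y ≤ (m : ℝ) * τ := fun x y h =>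
    chain_dist_le P τ μ m hτ0 (le_of_eq hτμ) F hFs hPF h
  -- symmetry of the chain relation
  have hsymm : ∀ {x y}, ChainRel P τ x y → ChainRel P τ y x := by
    intro x y h
    haveI : Std.Symm (fun a b : α => a ∈ P ∧ b ∈ P ∧ dist a b < τ) :=
      ⟨fun a b hab => ⟨hab.2.1, hab.1, by rw [dist_comm]; exact hab.2.2⟩⟩
    exact Std.Symm.symm (r := Relation.ReflTransGen _) _ _ h
  -- canonical representative of a chain component
  let rep : α → α := fun p =>
    if h : (P.filter (fun z => ChainRel P τ p z)).Nonempty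
    then h.choose else p
  have hrepne : ∀ p ∈ P, (P.filter (fun z => ChainRel P τ p z)).Nonempty := fun p hp =>
    ⟨p, Finset.mem_filter.2 ⟨hp, Relation.ReflTransGen.refl⟩⟩
  have hrep_mem : ∀ p ∈ P, rep p ∈ P ∧ ChainRel P τ p (rep p) := by
    intro p hp
    have hne' := hrepne p hp
    have hmem := hne'.choose_spec
    rw [Finset.mem_filter] at hmem
    simp only [rep, dif_pos hne']
    exact hmem
  have hrep_eq : ∀ p ∈ P, ∀ q ∈ P, (ChainRel P τ p q ↔ rep p = rep q) := by
    intro p hp q hq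
    constructor
    · intro hpq
      have hset : (P.filter fun z => ChainRel P τ p z) = (P.filter fun z => ChainRel P τ q z) := by
        ext z
        simp only [Finset.mem_filter]
        constructor
        · rintro ⟨hz, hc⟩; exact ⟨hz, Relation.ReflTransGen.trans (hsymm hpq) hc⟩
        · rintro ⟨hz, hc⟩; exact ⟨hz, Relation.ReflTransGen.trans hpq hc⟩
      simp only [rep]
      rw [hset]
      simp only [dif_pos (hrepne q hq)]
    · intro hrepeq
      have h1 := (hrep_mem p hp).2
      have h2 := (hrep_mem q hq).2
      exact Relation.ReflTransGen.trans h1 (hrepeq ▸ hsymm h2)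
  -- Sg i ⊆ P
  have hSgP : ∀ i, Sg i ⊆ P := fun i s hs =>
    Finset.mem_union_right _ (Finset.mem_biUnion.2 ⟨i, Finset.mem_univ i, hs⟩)
  -- rep is injective on each Sg i
  have hrepinj : ∀ i, Set.InjOn rep (Sg i) := by
    intro i s hs s' hs' heq
    by_contra hne'
    have hsep := (hSg i).2.1 s (Finset.mem_coe.1 hs) s' (Finset.mem_coe.1 hs') hne'
    have hc := (hrep_eq s (hSgP i (Finset.mem_coe.1 hs)) s' (hSgP i (Finset.mem_coe.1 hs'))).2 heq
    have := key _ _ hc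
    linarith
  -- group of an element of T
  have hgrpex : ∀ x ∈ T, ∃ i, x ∈ Xg i := by
    intro x hx
    have := hTX hx
    rw [hcover] at this
    obtain ⟨i, -, hi⟩ := Finset.mem_biUnion.1 this
    exact ⟨i, hi⟩
  let grp : ↥T → Fin m := fun x => (hgrpex x.1 x.2).choose
  have hgrpmem : ∀ x : ↥T, (x : α) ∈ Xg (grp x) := fun x => (hgrpex x.1 x.2).choose_spec
  have hgrp_unique : ∀ (x : ↥T) (i : Fin m), (x : α) ∈ Xg i → grp x = i := by
    intro x i hi
    by_contra hne'
    exact (Finset.disjoint_left.1 (hdisj _ _ hne') (hgrpmem x)) hi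
  -- |T| = k
  have hTk : T.card = k := by
    have hTsplit : T = Finset.univ.biUnion (fun i => T ∩ Xg i) := by
      ext x
      simp only [Finset.mem_biUnion, Finset.mem_inter, Finset.mem_univ, true_and]
      constructor
      · intro hx
        obtain ⟨i, hi⟩ := hgrpex x hx
        exact ⟨i, hx, hi⟩
      · rintro ⟨i, hx, -⟩; exact hx
    rw [hTsplit, Finset.card_biUnion]
    · simp only [hTcard, hk]
    · intro i _ j _ hij
      exact (hdisj i j hij).mono Finset.inter_subset_right Finset.inter_subset_right
  -- distance lower bound on distinct points of T
  have hTdist : ∀ x ∈ T, ∀ y ∈ T, x ≠ y → 3 * μ - τ ≤ dist x y := by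
    intro x hx y hy hxy
    have hdiv : divers T ≤ dist x y := by
      apply csInf_le
      · exact ⟨0, by rintro r ⟨a, -, b, -, -, rfl⟩; exact dist_nonneg⟩
      · exact ⟨x, hx, y, hy, hxy, rfl⟩
    have harith : 3 * μ - τ = (3 * (m : ℝ) + 2) / ((m : ℝ) + 1) * μ := by
      rw [hτ]; field_simp; ring
    linarith
  -- near point for partial groups
  have hnearex : ∀ x : ↥T, (Sg (grp x)).card < k → ∃ s ∈ Sg (grp x), dist (x : α) s < μ :=
    fun x h => (hSg (grp x)).2.2.2.2 h (x : α) (hgrpmem x)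
  let near : ↥T → α := fun x =>
    if h : (Sg (grp x)).card < k then (hnearex x h).choose else (x : α)
  have hnear : ∀ (x : ↥T) (h : (Sg (grp x)).card < k),
      near x ∈ Sg (grp x) ∧ dist (x : α) (near x) < μ := by
    intro x h
    have hspec := (hnearex x h).choose_spec
    simp only [near, dif_pos h]
    exact hspec
  -- Hall's condition
  let tfun : ↥T → Finset α := fun x => (Sg (grp x)).image rep
  have hall : ∀ s : Finset ↥T, s.card ≤ (s.biUnion tfun).card := by
    intro s
    by_cases hfull : ∃ x ∈ s, ¬ (Sg (grp x)).card < k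
    · obtain ⟨x₀, hx₀s, hx₀⟩ := hfull
      have hkle : k ≤ (Sg (grp x₀)).card := le_of_not_gt hx₀
      have hcard : (tfun x₀).card = (Sg (grp x₀)).card :=
        Finset.card_image_of_injOn (hrepinj (grp x₀))
      calc s.card ≤ Finset.univ.card := Finset.card_le_card (Finset.subset_univ s)
        _ = T.card := by rw [Finset.card_univ, Fintype.card_coe]
        _ = k := hTk
        _ ≤ (tfun x₀).card := by rw [hcard]; exact hkle
        _ ≤ (s.biUnion tfun).card :=
            Finset.card_le_card (Finset.subset_biUnion_of_mem tfun hx₀s)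
    · push_neg at hfull
      apply Finset.card_le_card_of_injOn (fun x => rep (near x))
      · intro x hxs
        have hx := hnear x (hfull x hxs)
        exact Finset.mem_biUnion.2 ⟨x, hxs, Finset.mem_image_of_mem rep hx.1⟩
      · intro x hxs y hys heq
        by_contra hne'
        have hx := hnear x (hfull x (Finset.mem_coe.1 hxs))
        have hy := hnear y (hfull y (Finset.mem_coe.1 hys))
        have hcc : ChainRel P τ (near x) (near y) :=
          (hrep_eq _ (hSgP _ hx.1) _ (hSgP _ hy.1)).2 heq
        have hd : dist (near x) (near y) ≤ (m : ℝ) * τ := key _ _ hcc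
        have htri : dist (x : α) (y : α) ≤
            dist (x : α) (near x) + dist (near x) (near y) + dist (near y) (y : α) :=
          dist_triangle4 _ _ _ _
        have hyy : dist (near y) (y : α) < μ := by rw [dist_comm]; exact hy.2
        have hvne : (x : α) ≠ (y : α) := fun h => hne' (Subtype.ext h)
        have hlow := hTdist _ x.2 _ y.2 hvne
        linarith
  obtain ⟨f, hfinj, hft⟩ := (Finset.all_card_le_biUnion_card_iff_exists_injective tfun).1 hall
  have hfx : ∀ x : ↥T, ∃ s ∈ Sg (grp x), rep s = f x := by
    intro x
    obtain ⟨s, hs, hrs⟩ := Finset.mem_image.1 (hft x)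
    exact ⟨s, hs, hrs⟩
  let g : ↥T → α := fun x => (hfx x).choose
  have hg : ∀ x, g x ∈ Sg (grp x) ∧ rep (g x) = f x := fun x => (hfx x).choose_spec
  have hgP : ∀ x, g x ∈ P := fun x => hSgP _ (hg x).1
  have hginj : Function.Injective g := by
    intro x y hxy
    apply hfinj
    rw [← (hg x).2, ← (hg y).2, hxy]
  set S : Finset α := T.attach.image g with hSdef
  have hSsub : S ⊆ P := by
    intro p hp
    obtain ⟨x, -, rfl⟩ := Finset.mem_image.1 hp
    exact hgP x
  -- the no-chain property
  have hnochain : ∀ x ∈ S, ∀ y ∈ S, x ≠ y → ¬ ChainRel P τ x y := by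
    intro x hx y hy hxy hcc
    obtain ⟨a, -, rfl⟩ := Finset.mem_image.1 hx
    obtain ⟨b, -, rfl⟩ := Finset.mem_image.1 hy
    have : rep (g a) = rep (g b) := (hrep_eq _ (hgP a) _ (hgP b)).1 hcc
    rw [(hg a).2, (hg b).2] at this
    exact hxy (congrArg g (hfinj this))
  -- cardinality
  have hScard : S.card = k := by
    rw [hSdef, Finset.card_image_of_injective _ hginj, Finset.card_attach, hTk]
  -- group counts
  have hScount : ∀ i, (S ∩ Xg i).card = kg i := by
    intro i
    have hgrpiff : ∀ x : ↥T, grp x = i ↔ (x : α) ∈ Xg i := by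
      intro x
      constructor
      · intro h; rw [← h]; exact hgrpmem x
      · exact hgrp_unique x i
    have hSXg : S ∩ Xg i = (T.attach.filter (fun x => grp x = i)).image g := by
      ext p
      constructor
      · intro hp
        obtain ⟨hpS, hpX⟩ := Finset.mem_inter.1 hp
        obtain ⟨x, -, rfl⟩ := Finset.mem_image.1 hpS
        have hgx : g x ∈ Xg (grp x) := (hSg (grp x)).1 (hg x).1
        have : grp x = i := by
          by_contra hne'
          exact (Finset.disjoint_left.1 (hdisj _ _ hne') hgx) hpX
        exact Finset.mem_image.2 ⟨x, Finset.mem_filter.2 ⟨Finset.mem_attach _ _, this⟩, rfl⟩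
      · intro hp
        obtain ⟨x, hx, rfl⟩ := Finset.mem_image.1 hp
        have hxi : grp x = i := (Finset.mem_filter.1 hx).2
        have hgx : g x ∈ Xg (grp x) := (hSg (grp x)).1 (hg x).1
        exact Finset.mem_inter.2
          ⟨Finset.mem_image.2 ⟨x, Finset.mem_attach _ _, rfl⟩, hxi ▸ hgx⟩
    rw [hSXg, Finset.card_image_of_injective _ hginj]
    have hfilt : T.attach.filter (fun x => grp x = i) =
        T.attach.filter (fun x : ↥T => (x : α) ∈ Xg i) := by
      ext x
      simp only [Finset.mem_filter, Finset.mem_attach, true_and]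
      exact hgrpiff x
    rw [hfilt]
    have himg : (T.attach.filter (fun x : ↥T => (x : α) ∈ Xg i)).image Subtype.val = T ∩ Xg i := by
      ext p
      simp only [Finset.mem_image, Finset.mem_filter, Finset.mem_attach, true_and,
        Finset.mem_inter]
      constructor
      · rintro ⟨x, hx, rfl⟩; exact ⟨x.2, hx⟩
      · rintro ⟨hpT, hpX⟩; exact ⟨⟨p, hpT⟩, hpX, rfl⟩
    rw [← hTcard i, ← himg, Finset.card_image_of_injective _ Subtype.val_injective]
  -- diversity lower bound
  have hSdiv : τ ≤ divers S := by
    apply le_csInf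
    · obtain ⟨x, hx, y, hy, hxy⟩ := Finset.one_lt_card.1 (by omega : 1 < S.card)
      exact ⟨dist x y, x, hx, y, hy, hxy, rfl⟩
    · rintro r ⟨p, hp, q, hq, hpq, rfl⟩
      by_contra hlt
      push_neg at hlt
      exact hnochain p hp q hq hpq
        (Relation.ReflTransGen.single ⟨hSsub hp, hSsub hq, hlt⟩)
  exact ⟨S, hSsub, hScount, hnochain, hScard, hSdiv⟩
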